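/- If, for each i = 1,…,m, the matrix-valued map x ↦ B_i(x) is continuous on ℝ^n with symmetric positive definite values, then the solution map d_ω : ℝ^n → ℝ^n, assigning to x the unique minimizer of φ_{ω,x}, is continuous. -/

import Mathlib

open Filter Topology
open scoped RealInnerProductSpace

noncomputable section

/-- `Euc n` is Euclidean `n`-space `ℝ^n`. -/
abbrev Euc (n : ℕ) := EuclideanSpace ℝ (Fin n)

/-- `HasDirDeriv f x d D` : the one-sided directional derivative of `f` at `x`
in direction `d` exists and equals `D`, i.e. `(f (x + α • d) - f x)/α → D` as `α → 0⁺`. -/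
def HasDirDeriv {n : ℕ} (f : Euc n → ℝ) (x d : Euc n) (D : ℝ) : Prop :=
  Filter.Tendsto (fun α : ℝ => (f (x + α • d) - f x) / α)
    (nhdsWithin 0 (Set.Ioi 0)) (nhds D)

/-- `x` is Pareto stationary for the objectives `F i`:
for every direction `d`, `max_i F_i'(x; d) ≥ 0`, i.e. some objective has
nonnegative directional derivative in direction `d`. -/
def ParetoStationary {n m : ℕ} (F : Fin m → Euc n → ℝ) (x : Euc n) : Prop :=
  ∀ d : Euc n, ∃ i : Fin m, ∃ D : ℝ, HasDirDeriv (F i) x d D ∧ 0 ≤ D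

/-- `θ_x(d) = max_i { ⟪∇g_i(x), d⟫ + ½⟪d, B_i(x) d⟫ + h_i(x+d) - h_i(x) }`. -/
def theta {n m : ℕ} (g h : Fin m → Euc n → ℝ)
    (B : Fin m → Euc n → (Euc n →L[ℝ] Euc n)) (x d : Euc n) : ℝ :=
  ⨆ i : Fin m, (⟪gradient (g i) x, d⟫ + (1 / 2) * ⟪d, B i x d⟫ + h i (x + d) - h i x)

/-- `φ_{ω,x}(d) = θ_x(d) + (ω/2)‖d‖²`. -/
def phi {n m : ℕ} (g h : Fin m → Euc n → ℝ)
    (B : Fin m → Euc n → (Euc n →L[ℝ] Euc n)) (ω : ℝ) (x d : Euc n) : ℝ :=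
  theta g h B x d + (ω / 2) * ‖d‖ ^ 2

/-- The individual quadratic models appearing inside `theta`. -/
def Amodel {n m : ℕ} (g h : Fin m → Euc n → ℝ)
    (B : Fin m → Euc n → (Euc n →L[ℝ] Euc n)) (i : Fin m) (y d : Euc n) : ℝ :=
  ⟪gradient (g i) y, d⟫ + (1 / 2) * ⟪d, B i y d⟫ + h i (y + d) - h i y

set_option maxHeartbeats 2000000 in
/-- continuity of the solution map d_ω. -/
theorem d_omega_continuous
    {n m : ℕ} (g h : Fin m → Euc n → ℝ)
    (B : Fin m → Euc n → (Euc n →L[ℝ] Euc n))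
    (hm : 0 < m)
    (hg : ∀ i, ContDiff ℝ 2 (g i))
    (hsc : ∀ i, ∃ a : ℝ, 0 < a ∧ ∀ x y : Euc n,
      a * ‖x - y‖ ^ 2 ≤ ⟪gradient (g i) x - gradient (g i) y, x - y⟫)
    (hh : ∀ i, ConvexOn ℝ Set.univ (h i))
    (hBsymm : ∀ i x (u v : Euc n), ⟪B i x u, v⟫ = ⟪u, B i x v⟫)
    (hBpos : ∀ i x (d : Euc n), d ≠ 0 → 0 < ⟪d, B i x d⟫)
    (hBcont : ∀ i, Continuous (fun x => B i x))
    (ω : ℝ) (hω : 0 < ω)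
    (dω : Euc n → Euc n)
    (hmin : ∀ y d, phi g h B ω y (dω y) ≤ phi g h B ω y d)
    (huniq : ∀ y d, (∀ d', phi g h B ω y d ≤ phi g h B ω y d') → d = dω y) :
    Continuous dω := by
  haveI : Nonempty (Fin m) := ⟨⟨0, hm⟩⟩
  set A : Fin m → Euc n → Euc n → ℝ := Amodel g h B with hAdef
  have hAunfold : ∀ i y d, A i y d
      = ⟪gradient (g i) y, d⟫ + (1 / 2) * ⟪d, B i y d⟫ + h i (y + d) - h i y :=
    fun i y d => rfl
  have hthetaA : ∀ y d, theta g h B y d = ⨆ i, A i y d := fun y d => rfl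
  have hbdd : ∀ y d, BddAbove (Set.range fun i => A i y d) :=
    fun y d => (Set.finite_range _).bddAbove
  have hA_le : ∀ i y d, A i y d ≤ theta g h B y d := fun i y d => by
    rw [hthetaA]; exact le_ciSup (hbdd y d) i
  have htheta_le : ∀ y d c, (∀ i, A i y d ≤ c) → theta g h B y d ≤ c := fun y d c hc => by
    rw [hthetaA]; exact ciSup_le hc
  have hq : ∀ i y (d : Euc n), 0 ≤ ⟪d, B i y d⟫ := by
    intro i y d
    rcases eq_or_ne d 0 with rfl | hd
    · simp
    · exact (hBpos i y d hd).le
  have hcont_h : ∀ i, Continuous (h i) := fun i => by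
    rw [← continuousOn_univ]
    exact (hh i).continuousOn isOpen_univ
  have hgrad_cont : ∀ i, Continuous (fun y => gradient (g i) y) := by
    intro i
    show Continuous fun y => (InnerProductSpace.toDual ℝ (Euc n)).symm (fderiv ℝ (g i) y)
    exact (InnerProductSpace.toDual ℝ _).symm.continuous.comp
      ((hg i).continuous_fderiv two_ne_zero)
  have htheta0 : ∀ y, theta g h B y 0 = 0 := by
    intro y
    rw [hthetaA]
    have hz : ∀ i : Fin m, A i y 0 = 0 := fun i => by simp [hAdef, Amodel]
    simp only [hz]
    exact ciSup_const
  -- midpoint convexity of each model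
  have hAmid : ∀ i y (d e : Euc n),
      A i y ((1/2 : ℝ) • (d + e)) ≤ (1/2) * A i y d + (1/2) * A i y e := by
    intro i y d e
    have hsym : ∀ u v : Euc n, ⟪u, B i y v⟫ = ⟪v, B i y u⟫ := fun u v => by
      rw [← hBsymm i y u v, real_inner_comm]
    have hlin : ⟪gradient (g i) y, (1/2 : ℝ) • (d + e)⟫
        = (1/2) * ⟪gradient (g i) y, d⟫ + (1/2) * ⟪gradient (g i) y, e⟫ := by
      rw [real_inner_smul_right, inner_add_right]; ring
    have hquad : ⟪(1/2 : ℝ) • (d + e), B i y ((1/2 : ℝ) • (d + e))⟫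
        = (1/4) * (⟪d, B i y d⟫ + 2 * ⟪d, B i y e⟫ + ⟪e, B i y e⟫) := by
      rw [map_smul, map_add, real_inner_smul_left, real_inner_smul_right,
        inner_add_left, inner_add_right, inner_add_right, hsym e d]
      ring
    have hpos : 0 ≤ ⟪d - e, B i y (d - e)⟫ := hq i y (d - e)
    have hexp : ⟪d - e, B i y (d - e)⟫
        = ⟪d, B i y d⟫ - 2 * ⟪d, B i y e⟫ + ⟪e, B i y e⟫ := by
      rw [map_sub, inner_sub_left, inner_sub_right, inner_sub_right, hsym e d]
      ring
    have hconv := (hh i).2 (Set.mem_univ (y + d)) (Set.mem_univ (y + e))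
      (by norm_num : (0:ℝ) ≤ 1/2) (by norm_num : (0:ℝ) ≤ 1/2) (by norm_num : (1:ℝ)/2 + 1/2 = 1)
    simp only [smul_eq_mul] at hconv
    have hpt : (1/2 : ℝ) • (y + d) + (1/2 : ℝ) • (y + e) = y + (1/2 : ℝ) • (d + e) := by
      module
    rw [hpt] at hconv
    simp only [hAunfold]
    rw [hlin, hquad]
    linarith [hconv, hpos, hexp]
  -- parallelogram identity
  have hnormmid : ∀ d e : Euc n, ‖(1/2 : ℝ) • (d + e)‖ ^ 2
      = (1/2) * ‖d‖^2 + (1/2) * ‖e‖^2 - (1/4) * ‖d - e‖^2 := by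
    intro d e
    have h1 : ‖(1/2 : ℝ) • (d + e)‖ = (1/2) * ‖d + e‖ := by
      rw [norm_smul]; norm_num
    have h2 : ‖d + e‖^2 = ‖d‖^2 + 2*⟪d,e⟫ + ‖e‖^2 := norm_add_sq_real d e
    have h3 : ‖d - e‖^2 = ‖d‖^2 - 2*⟪d,e⟫ + ‖e‖^2 := norm_sub_sq_real d e
    rw [h1, mul_pow]
    nlinarith [h2, h3]
  -- quadratic growth around the minimizer
  have hgrow : ∀ y (d : Euc n),
      (ω/4) * ‖d - dω y‖^2 ≤ phi g h B ω y d - phi g h B ω y (dω y) := by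
    intro y d
    set e := dω y with he
    have hth : theta g h B y ((1/2 : ℝ) • (d + e))
        ≤ (1/2) * theta g h B y d + (1/2) * theta g h B y e := by
      apply htheta_le
      intro i
      have h1 := hAmid i y d e
      have h2 := hA_le i y d
      have h3 := hA_le i y e
      linarith
    have hphim := hmin y ((1/2 : ℝ) • (d + e))
    have hnm := hnormmid d e
    simp only [phi] at hphim ⊢
    rw [hnm] at hphim
    nlinarith [hth, hphim]
  -- now continuity
  rw [continuous_iff_continuousAt]
  intro x
  unfold ContinuousAt
  rw [Metric.tendsto_nhds]
  intro ε hε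
  set i0 : Fin m := ⟨0, hm⟩ with hi0
  have hx1 : x ∈ Metric.closedBall x 1 := Metric.mem_closedBall_self zero_le_one
  have hx2 : x ∈ Metric.closedBall x 2 := Metric.mem_closedBall_self (by norm_num)
  -- bound for the gradient of g i0 on the unit ball
  obtain ⟨yg, _, hMg'⟩ := (isCompact_closedBall x 1).exists_isMaxOn ⟨x, hx1⟩
    ((hgrad_cont i0).norm.continuousOn)
  set Mg := ‖gradient (g i0) yg‖ with hMgdef
  have hMg : ∀ y ∈ Metric.closedBall x 1, ‖gradient (g i0) y‖ ≤ Mg := fun y hy => hMg' hy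
  have hMg0 : 0 ≤ Mg := le_trans (norm_nonneg _) (hMg x hx1)
  -- bounds for h i0 on the ball of radius 2
  obtain ⟨yM, _, hyM'⟩ := (isCompact_closedBall x 2).exists_isMaxOn ⟨x, hx2⟩
    ((hcont_h i0).continuousOn)
  obtain ⟨ym, _, hym'⟩ := (isCompact_closedBall x 2).exists_isMinOn ⟨x, hx2⟩
    ((hcont_h i0).continuousOn)
  set Mh := h i0 yM with hMhdef
  set mh := h i0 ym with hmhdef
  have hyM : ∀ y ∈ Metric.closedBall x 2, h i0 y ≤ Mh := fun y hy => hyM' hy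
  have hym : ∀ y ∈ Metric.closedBall x 2, mh ≤ h i0 y := fun y hy => hym' hy
  have hosc : 0 ≤ Mh - mh := by linarith [hyM x hx2, hym x hx2]
  -- lower bound for h i0 increments
  have hhlow : ∀ y ∈ Metric.closedBall x 1, ∀ d : Euc n,
      -((Mh - mh) * (1 + ‖d‖)) ≤ h i0 (y + d) - h i0 y := by
    intro y hy d
    have hyb : dist y x ≤ 1 := Metric.mem_closedBall.mp hy
    have hyball2 : y ∈ Metric.closedBall x 2 := by
      rw [Metric.mem_closedBall]; linarith
    have hMy := hyM y hyball2
    rcases le_or_gt ‖d‖ 1 with hd | hd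
    · have h1 : y + d ∈ Metric.closedBall x 2 := by
        rw [Metric.mem_closedBall]
        have hdy : dist (y + d) y = ‖d‖ := by
          rw [dist_eq_norm]; congr 1; abel
        calc dist (y + d) x ≤ dist (y + d) y + dist y x := dist_triangle _ _ _
          _ ≤ 2 := by rw [hdy]; linarith
      have h2 := hym (y + d) h1
      nlinarith [norm_nonneg d]
    · have hd0 : (0:ℝ) < ‖d‖ := lt_trans one_pos hd
      set t : ℝ := 1 / ‖d‖ with htdef
      have ht0 : 0 < t := by positivity
      have ht1 : t < 1 := by rw [htdef, div_lt_one hd0]; exact hd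
      have hconv := (hh i0).2 (Set.mem_univ y) (Set.mem_univ (y + d))
        (by linarith : (0:ℝ) ≤ 1 - t) ht0.le (by ring : (1 - t) + t = 1)
      simp only [smul_eq_mul] at hconv
      have hpt : (1 - t) • y + t • (y + d) = y + t • d := by module
      rw [hpt] at hconv
      have hts : ‖t • d‖ = 1 := by
        rw [norm_smul, Real.norm_eq_abs, abs_of_pos ht0, htdef]
        field_simp
      have hmem : y + t • d ∈ Metric.closedBall x 2 := by
        rw [Metric.mem_closedBall]
        have hdy : dist (y + t • d) y = ‖t • d‖ := by
          rw [dist_eq_norm]; congr 1; abel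
        calc dist (y + t • d) x ≤ dist (y + t • d) y + dist y x := dist_triangle _ _ _
          _ ≤ 2 := by rw [hdy, hts]; linarith
      have h2 := hym (y + t • d) hmem
      have key : mh ≤ (1 - t) * h i0 y + t * h i0 (y + d) := le_trans h2 hconv
      have key2 : mh * ‖d‖ ≤ (‖d‖ - 1) * h i0 y + h i0 (y + d) := by
        have h4 := mul_le_mul_of_nonneg_left key hd0.le
        have h5 : ‖d‖ * ((1 - t) * h i0 y + t * h i0 (y + d))
            = (‖d‖ - 1) * h i0 y + h i0 (y + d) := by
          rw [htdef]; field_simp; try ring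
        linarith [h4, h5.le, h5.ge]
      have h6 := mul_le_mul_of_nonneg_left hMy (norm_nonneg d)
      nlinarith [key2, h6, hosc, norm_nonneg d]
  -- a priori bound for the minimizers over the unit ball
  obtain ⟨R, hRdef⟩ : ∃ R : ℝ, R = 1 + 4 * (Mg + (Mh - mh)) / ω := ⟨_, rfl⟩
  have hR1 : 1 ≤ R := by
    rw [hRdef]
    have h8 : 0 ≤ 4 * (Mg + (Mh - mh)) / ω := div_nonneg (by linarith [hMg0, hosc]) hω.le
    linarith [h8]
  have hRpos : (0:ℝ) < R := lt_of_lt_of_le one_pos hR1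
  have hRbound : ∀ y ∈ Metric.closedBall x 1, ‖dω y‖ ≤ R := by
    intro y hy
    set v := dω y with hv
    have h0 : phi g h B ω y v ≤ 0 := by
      have hm0 := hmin y 0
      simp only [phi, htheta0 y] at hm0
      simpa [phi] using hm0
    have hAv : A i0 y v ≤ theta g h B y v := hA_le i0 y v
    have hgyv : -(Mg * ‖v‖) ≤ ⟪gradient (g i0) y, v⟫ := by
      have h1 := abs_real_inner_le_norm (gradient (g i0) y) v
      have h2 := hMg y hy
      have h3 := abs_le.mp h1
      nlinarith [norm_nonneg v, h3.1]
    have hqv := hq i0 y v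
    have hhv := hhlow y hy v
    have hlow : -(Mg * ‖v‖) - (Mh - mh) * (1 + ‖v‖) + (ω/2) * ‖v‖^2
        ≤ phi g h B ω y v := by
      have : -(Mg * ‖v‖) - (Mh - mh) * (1 + ‖v‖) ≤ A i0 y v := by
        simp only [hAunfold]
        linarith [hgyv, hqv, hhv]
      simp only [phi]
      linarith [hAv]
    -- now ‖v‖ ≤ R
    rcases le_or_gt ‖v‖ 1 with hvs | hvs
    · linarith
    · have h5 : (ω/2) * ‖v‖^2 ≤ 2 * (Mg + (Mh - mh)) * ‖v‖ := by
        nlinarith [h0, hlow, hosc, mul_le_mul_of_nonneg_left hvs.le hosc,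
          mul_le_mul_of_nonneg_left hvs.le hMg0]
      have h6 : (ω/2) * ‖v‖ ≤ 2 * (Mg + (Mh - mh)) := by
        nlinarith [h5, hvs]
      have h7 : ‖v‖ ≤ 4 * (Mg + (Mh - mh)) / ω := by
        rw [le_div_iff₀ hω]; linarith
      rw [hRdef]; linarith
  have huR : ‖dω x‖ ≤ R := hRbound x hx1
  -- the small constant
  obtain ⟨κ, hκdef⟩ : ∃ κ : ℝ, κ = ω * ε^2 / 100 := ⟨_, rfl⟩
  have hκ0 : 0 < κ := by
    rw [hκdef]; positivity
  -- eventual closeness statements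
  have ev1 : ∀ i : Fin m, ∀ᶠ y in 𝓝 x,
      ‖gradient (g i) y - gradient (g i) x‖ ≤ κ / R := by
    intro i
    have ht := (hgrad_cont i).tendsto x
    have := Metric.tendsto_nhds.mp ht (κ / R) (by positivity)
    filter_upwards [this] with y hy
    rw [dist_eq_norm] at hy
    exact hy.le
  have ev2 : ∀ i : Fin m, ∀ᶠ y in 𝓝 x, ‖B i y - B i x‖ ≤ κ / R^2 := by
    intro i
    have ht := (hBcont i).tendsto x
    have := Metric.tendsto_nhds.mp ht (κ / R^2) (by positivity)
    filter_upwards [this] with y hy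
    rw [dist_eq_norm] at hy
    exact hy.le
  have ev3 : ∀ i : Fin m, ∀ᶠ y in 𝓝 x, ∀ d : Euc n, ‖d‖ ≤ R →
      |h i (y + d) - h i (x + d)| ≤ κ := by
    intro i
    have huc := (isCompact_closedBall x (2 + R)).uniformContinuousOn_of_continuous
      ((hcont_h i).continuousOn)
    obtain ⟨δ, hδ, hδ'⟩ := Metric.uniformContinuousOn_iff.mp huc κ hκ0
    filter_upwards [Metric.ball_mem_nhds x (lt_min hδ one_pos)] with y hy d hd
    rw [Metric.mem_ball, lt_min_iff] at hy
    have hyx : dist y x < δ := hy.1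
    have hyx1 : dist y x ≤ 1 := hy.2.le
    have hm1 : y + d ∈ Metric.closedBall x (2 + R) := by
      rw [Metric.mem_closedBall]
      have hdy : dist (y + d) y = ‖d‖ := by rw [dist_eq_norm]; congr 1; abel
      calc dist (y + d) x ≤ dist (y + d) y + dist y x := dist_triangle _ _ _
        _ ≤ 2 + R := by rw [hdy]; linarith
    have hm2 : x + d ∈ Metric.closedBall x (2 + R) := by
      rw [Metric.mem_closedBall]
      have hdy : dist (x + d) x = ‖d‖ := by rw [dist_eq_norm]; congr 1; abel
      rw [hdy]; linarith
    have hdd : dist (y + d) (x + d) < δ := by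
      have : dist (y + d) (x + d) = dist y x := by
        rw [dist_eq_norm, dist_eq_norm]; congr 1; abel
      rw [this]; exact hyx
    have := hδ' (y + d) hm1 (x + d) hm2 hdd
    rw [Real.dist_eq] at this
    exact this.le
  have ev4 : ∀ᶠ y in 𝓝 x, y ∈ Metric.closedBall x 1 := by
    filter_upwards [Metric.ball_mem_nhds x one_pos] with y hy
    exact Metric.ball_subset_closedBall hy
  filter_upwards [eventually_all.mpr ev1, eventually_all.mpr ev2,
    eventually_all.mpr ev3, ev4] with y h1 h2 h3 h4
  -- difference of phi at the two points, uniformly on the ball of radius R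
  obtain ⟨S, hSdef⟩ : ∃ S : ℝ, S = κ + κ/2 + 2*κ := ⟨_, rfl⟩
  have hdiff : ∀ d : Euc n, ‖d‖ ≤ R → |phi g h B ω y d - phi g h B ω x d| ≤ S := by
    intro d hd
    have hdR2 : ‖d‖^2 ≤ R^2 := by nlinarith [norm_nonneg d]
    have hb : ∀ i, |A i y d - A i x d| ≤ S := by
      intro i
      have e1 : |⟪gradient (g i) y, d⟫ - ⟪gradient (g i) x, d⟫| ≤ κ := by
        rw [← inner_sub_left]
        calc |⟪gradient (g i) y - gradient (g i) x, d⟫|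
            ≤ ‖gradient (g i) y - gradient (g i) x‖ * ‖d‖ := abs_real_inner_le_norm _ _
          _ ≤ (κ / R) * R := by
              apply mul_le_mul (h1 i) hd (norm_nonneg d)
              positivity
          _ = κ := by field_simp
      have e2 : |⟪d, B i y d⟫ - ⟪d, B i x d⟫| ≤ κ := by
        rw [← inner_sub_right]
        have hBd : B i y d - B i x d = (B i y - B i x) d := rfl
        rw [hBd]
        calc |⟪d, (B i y - B i x) d⟫| ≤ ‖d‖ * ‖(B i y - B i x) d‖ :=
              abs_real_inner_le_norm _ _
          _ ≤ ‖d‖ * (‖B i y - B i x‖ * ‖d‖) := by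
              apply mul_le_mul_of_nonneg_left ((B i y - B i x).le_opNorm d) (norm_nonneg d)
          _ ≤ R * ((κ / R^2) * R) := by
              apply mul_le_mul hd _ (by positivity) (le_of_lt hRpos)
              exact mul_le_mul (h2 i) hd (norm_nonneg d) (by positivity)
          _ = κ := by field_simp
      have e3 : |h i (y + d) - h i (x + d)| ≤ κ := h3 i d hd
      have e4 : |h i y - h i x| ≤ κ := by
        have := h3 i 0 (by simpa using hRpos.le)
        simpa using this
      have hdec : A i y d - A i x d
          = (⟪gradient (g i) y, d⟫ - ⟪gradient (g i) x, d⟫)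
            + (1/2) * (⟪d, B i y d⟫ - ⟪d, B i x d⟫)
            + ((h i (y + d) - h i (x + d)) - (h i y - h i x)) := by
        simp only [hAunfold]; ring
      rw [hSdef, hdec]
      have a1 := abs_le.mp e1
      have a2 := abs_le.mp e2
      have a3 := abs_le.mp e3
      have a4 := abs_le.mp e4
      rw [abs_le]
      constructor <;> [skip; skip] <;> nlinarith [a1.1, a1.2, a2.1, a2.2, a3.1, a3.2, a4.1, a4.2]
    have t1 : theta g h B y d ≤ theta g h B x d + S := by
      apply htheta_le
      intro i
      have := (abs_le.mp (hb i)).2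
      linarith [hA_le i x d]
    have t2 : theta g h B x d ≤ theta g h B y d + S := by
      apply htheta_le
      intro i
      have := (abs_le.mp (hb i)).1
      have hby : A i y d ≤ theta g h B y d := hA_le i y d
      linarith
    have hphieq : phi g h B ω y d - phi g h B ω x d
        = theta g h B y d - theta g h B x d := by
      simp only [phi]; ring
    rw [hphieq, abs_le]
    constructor <;> linarith
  -- master inequality
  have hvR : ‖dω y‖ ≤ R := hRbound y h4
  have m1 := hgrow y (dω x)
  have m2 := hgrow x (dω y)
  have d1 := hdiff (dω x) huR
  have d2 := hdiff (dω y) hvR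
  have a1 := abs_le.mp d1
  have a2 := abs_le.mp d2
  have hns2 : ‖dω x - dω y‖^2 = ‖dω y - dω x‖^2 := by rw [norm_sub_rev]
  rw [dist_eq_norm]
  rw [hns2] at m1
  have hkey : (ω/2) * ‖dω y - dω x‖^2 ≤ 2*S := by linarith [m1, m2, a1.2, a2.1]
  have hsq : ‖dω y - dω x‖^2 < ε^2 := by
    nlinarith [hkey, mul_pos hω (pow_pos hε 2), hω, sq_nonneg (‖dω y - dω x‖)]
  by_contra hcon
  push_neg at hcon
  have : ε^2 ≤ ‖dω y - dω x‖^2 := pow_le_pow_left₀ hε.le hcon 2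
  linarith
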